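/- Nonexistence of a GR(1) assumption: for the turn-based game graph of Figure 2, for every initial node v ∈ V, there does not exist a GR(1) property P of the form □ρ ∧ ⋀_{i∈I} □◇P_i — where I is a finite index set, each P_i ⊆ V is a set of nodes, and ρ ⊆ ρ1 is a subset of player 1's edge relation — such that both: (i) player 1, restricted to choosing only edges in ρ, has a strategy from v all of whose consistent plays satisfy ⋀_{i∈I} □◇P_i; and (ii) player 0 has a strategy from v all of whose consistent plays satisfy (□ρ ∧ ⋀_{i∈I} □◇P_i) → (□◇G1 ∧ □◇G2), where a play satisfies □ρ if every step taken from a node owned by player 1 is an edge of ρ. -/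

import Mathlib

namespace Fig2

/-- Nodes `s0, …, s6` of the game graph of Figure 2. -/
abbrev V := Fin 7

/-- Player 0 owns the odd-indexed nodes `s1, s3, s5`;
player 1 owns the even-indexed nodes `s0, s2, s4, s6`. -/
def owner : V → Fin 2 := fun v => if v.val % 2 = 1 then 0 else 1

/-- The edge relation of player `j`:
`ρ0 = {s1→s0, s1→s2, s3→s2, s3→s4, s5→s6}` and
`ρ1 = {s0→s1, s2→s3, s4→s1, s4→s5, s6→s3}`. -/
def ρ : Fin 2 → V → V → Prop := fun j v u =>
  ((j.val, v.val, u.val) : ℕ × ℕ × ℕ) ∈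
    [(0,1,0), (0,1,2), (0,3,2), (0,3,4), (0,5,6),
     (1,0,1), (1,2,3), (1,4,1), (1,4,5), (1,6,3)]

/-- An infinite play: every step is an edge of the player owning the current node. -/
def IsPlay (w : ℕ → V) : Prop := ∀ k : ℕ, ρ (owner (w k)) (w k) (w (k + 1))

/-- A strategy maps a finite history together with the current node to the next node. -/
abbrev Strategy := List V → V → V

/-- A strategy of player `j` must choose edges of `ρ j` at nodes owned by player `j`. -/
def ValidStrategy (j : Fin 2) (σ : Strategy) : Prop :=
  ∀ (h : List V) (v : V), owner v = j → ρ j v (σ h v)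

/-- A play is consistent with a strategy of player `j` if at every position owned
by player `j`, the next node is the one chosen by the strategy. -/
def Consistent (j : Fin 2) (σ : Strategy) (w : ℕ → V) : Prop :=
  ∀ k : ℕ, owner (w k) = j → w (k + 1) = σ ((List.range k).map w) (w k)

/-- `□◇P`: the play visits `P` infinitely often. -/
def InfOften (P : Set V) (w : ℕ → V) : Prop := ∀ N : ℕ, ∃ k ≥ N, w k ∈ P

/-- Player `j` realizes property `φ` from node `v`. -/
def Realizes (j : Fin 2) (v : V) (φ : (ℕ → V) → Prop) : Prop :=
  ∃ σ : Strategy, ValidStrategy j σ ∧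
    ∀ w : ℕ → V, IsPlay w → w 0 = v → Consistent j σ w → φ w

/-- The goal set `G1 = {s6}` of the game of Figure 2. -/
def G1 : Set V := {6}

/-- The goal set `G2 = {s0}` of the game of Figure 2. -/
def G2 : Set V := {0}


/-! ### Auxiliary machinery -/

instance (j : Fin 2) (a b : V) : Decidable (ρ j a b) := by
  unfold ρ; infer_instance

lemma allV : ∀ x : V, x = 0 ∨ x = 1 ∨ x = 2 ∨ x = 3 ∨ x = 4 ∨ x = 5 ∨ x = 6 := by decide

/-- Run two strategies against each other: `σ` plays for player 0, `τ` for player 1. -/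
def run (σ τ : Strategy) (v : V) : ℕ → List V × V
  | 0 => ([], v)
  | k+1 =>
      ((run σ τ v k).1 ++ [(run σ τ v k).2],
        if owner (run σ τ v k).2 = 0 then σ (run σ τ v k).1 (run σ τ v k).2
        else τ (run σ τ v k).1 (run σ τ v k).2)

/-- The resulting play. -/
def rp (σ τ : Strategy) (v : V) (k : ℕ) : V := (run σ τ v k).2

lemma run_fst (σ τ : Strategy) (v : V) : ∀ k, (run σ τ v k).1 = (List.range k).map (rp σ τ v)
  | 0 => by simp [run]
  | k+1 => by simp [run, List.range_succ, run_fst σ τ v k, rp]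

lemma rp_succ (σ τ : Strategy) (v : V) (k : ℕ) :
    rp σ τ v (k+1) = if owner (rp σ τ v k) = 0
      then σ ((List.range k).map (rp σ τ v)) (rp σ τ v k)
      else τ ((List.range k).map (rp σ τ v)) (rp σ τ v k) := by
  simp only [rp, run, run_fst]
  rfl

lemma consistent0 (σ τ : Strategy) (v : V) : Consistent 0 σ (rp σ τ v) := by
  intro k hk; rw [rp_succ, if_pos hk]

lemma consistent1 (σ τ : Strategy) (v : V) : Consistent 1 τ (rp σ τ v) := by
  intro k hk; rw [rp_succ, if_neg (by rw [hk]; decide)]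

lemma isPlay_rp (σ τ : Strategy) (v : V)
    (h0 : ∀ (h : List V) (c : V), owner c = 0 → ρ 0 c (σ h c))
    (h1 : ∀ (h : List V) (c : V), owner c = 1 → ρ 1 c (τ h c)) :
    IsPlay (rp σ τ v) := by
  intro k
  rcases (by decide : ∀ c : V, owner c = 0 ∨ owner c = 1) (rp σ τ v k) with h | h
  · rw [h, consistent0 σ τ v k h]; exact h0 _ _ h
  · rw [h, consistent1 σ τ v k h]; exact h1 _ _ h

lemma move0 (σ τ : Strategy) (v : V) (k : ℕ) (c : V) (h : rp σ τ v k = c)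
    (ho : owner c = 0) : rp σ τ v (k+1) = σ ((List.range k).map (rp σ τ v)) c := by
  rw [← h]; exact consistent0 σ τ v k (by rw [h]; exact ho)

lemma move1 (σ τ : Strategy) (v : V) (k : ℕ) (c : V) (h : rp σ τ v k = c)
    (ho : owner c = 1) : rp σ τ v (k+1) = τ ((List.range k).map (rp σ τ v)) c := by
  rw [← h]; exact consistent1 σ τ v k (by rw [h]; exact ho)

/-! ### Local step lemmas, valid for any play -/

lemma pstep0 (p : ℕ → V) (hp : IsPlay p) (k : ℕ) (h : p k = 0) : p (k+1) = 1 := by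
  have e := hp k; rw [h] at e
  exact (by decide : ∀ b : V, ρ (owner 0) 0 b → b = 1) _ e

lemma pstep1 (p : ℕ → V) (hp : IsPlay p) (k : ℕ) (h : p k = 1) :
    p (k+1) = 0 ∨ p (k+1) = 2 := by
  have e := hp k; rw [h] at e
  exact (by decide : ∀ b : V, ρ (owner 1) 1 b → b = 0 ∨ b = 2) _ e

lemma pstep2 (p : ℕ → V) (hp : IsPlay p) (k : ℕ) (h : p k = 2) : p (k+1) = 3 := by
  have e := hp k; rw [h] at e
  exact (by decide : ∀ b : V, ρ (owner 2) 2 b → b = 3) _ e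

lemma pstep3 (p : ℕ → V) (hp : IsPlay p) (k : ℕ) (h : p k = 3) :
    p (k+1) = 2 ∨ p (k+1) = 4 := by
  have e := hp k; rw [h] at e
  exact (by decide : ∀ b : V, ρ (owner 3) 3 b → b = 2 ∨ b = 4) _ e

lemma pstep4 (p : ℕ → V) (hp : IsPlay p) (k : ℕ) (h : p k = 4) :
    p (k+1) = 1 ∨ p (k+1) = 5 := by
  have e := hp k; rw [h] at e
  exact (by decide : ∀ b : V, ρ (owner 4) 4 b → b = 1 ∨ b = 5) _ e

lemma pstep5 (p : ℕ → V) (hp : IsPlay p) (k : ℕ) (h : p k = 5) : p (k+1) = 6 := by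
  have e := hp k; rw [h] at e
  exact (by decide : ∀ b : V, ρ (owner 5) 5 b → b = 6) _ e

lemma pstep6 (p : ℕ → V) (hp : IsPlay p) (k : ℕ) (h : p k = 6) : p (k+1) = 3 := by
  have e := hp k; rw [h] at e
  exact (by decide : ∀ b : V, ρ (owner 6) 6 b → b = 3) _ e

lemma pinto0 (p : ℕ → V) (hp : IsPlay p) (k : ℕ) (h : p (k+1) = 0) : p k = 1 := by
  have e := hp k; rw [h] at e
  exact (by decide : ∀ a : V, ρ (owner a) a 0 → a = 1) _ e

lemma pinto1 (p : ℕ → V) (hp : IsPlay p) (k : ℕ) (h : p (k+1) = 1) : p k = 0 ∨ p k = 4 := by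
  have e := hp k; rw [h] at e
  exact (by decide : ∀ a : V, ρ (owner a) a 1 → a = 0 ∨ a = 4) _ e

lemma pinto2 (p : ℕ → V) (hp : IsPlay p) (k : ℕ) (h : p (k+1) = 2) : p k = 1 ∨ p k = 3 := by
  have e := hp k; rw [h] at e
  exact (by decide : ∀ a : V, ρ (owner a) a 2 → a = 1 ∨ a = 3) _ e

lemma pinto3 (p : ℕ → V) (hp : IsPlay p) (k : ℕ) (h : p (k+1) = 3) : p k = 2 ∨ p k = 6 := by
  have e := hp k; rw [h] at e
  exact (by decide : ∀ a : V, ρ (owner a) a 3 → a = 2 ∨ a = 6) _ e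

lemma pinto4 (p : ℕ → V) (hp : IsPlay p) (k : ℕ) (h : p (k+1) = 4) : p k = 3 := by
  have e := hp k; rw [h] at e
  exact (by decide : ∀ a : V, ρ (owner a) a 4 → a = 3) _ e

lemma pinto5 (p : ℕ → V) (hp : IsPlay p) (k : ℕ) (h : p (k+1) = 5) : p k = 4 := by
  have e := hp k; rw [h] at e
  exact (by decide : ∀ a : V, ρ (owner a) a 5 → a = 4) _ e

lemma pinto6 (p : ℕ → V) (hp : IsPlay p) (k : ℕ) (h : p (k+1) = 6) : p k = 5 := by
  have e := hp k; rw [h] at e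
  exact (by decide : ∀ a : V, ρ (owner a) a 6 → a = 5) _ e

/-! ### Fixed strategies -/

/-- Trap strategy of player 0 driving the play into the cycle `{s2, s3}`. -/
def t23 : Strategy := fun _ c => if c = 1 then 2 else if c = 3 then 2 else 6

/-- Trap strategy of player 0: `s1 ↦ s0`, `s3 ↦ s4`, `s5 ↦ s6`. -/
def tst : Strategy := fun _ c => if c = 1 then 0 else if c = 3 then 4 else 6

/-- Fixed behavior of player 1 always taking `s4 → s1`. -/
def f1 : Strategy := fun _ c => if c = 0 then 1 else if c = 4 then 1 else 3

/-- Fixed behavior of player 1 always taking `s4 → s5`. -/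
def f2 : Strategy := fun _ c => if c = 0 then 1 else if c = 4 then 5 else 3

lemma t23_valid : ∀ (h : List V) (c : V), owner c = 0 → ρ 0 c (t23 h c) := fun _ c =>
  (by decide : ∀ c : V, owner c = 0 → ρ 0 c (if c = 1 then 2 else if c = 3 then 2 else 6)) c

lemma tst_valid : ∀ (h : List V) (c : V), owner c = 0 → ρ 0 c (tst h c) := fun _ c =>
  (by decide : ∀ c : V, owner c = 0 → ρ 0 c (if c = 1 then 0 else if c = 3 then 4 else 6)) c

lemma f1_valid : ∀ (h : List V) (c : V), owner c = 1 → ρ 1 c (f1 h c) := fun _ c =>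
  (by decide : ∀ c : V, owner c = 1 → ρ 1 c (if c = 0 then 1 else if c = 4 then 1 else 3)) c

lemma f2_valid : ∀ (h : List V) (c : V), owner c = 1 → ρ 1 c (f2 h c) := fun _ c =>
  (by decide : ∀ c : V, owner c = 1 → ρ 1 c (if c = 0 then 1 else if c = 4 then 5 else 3)) c

/-! ### Walking back from `s0` to the edge `s4 → s1` -/

lemma back_to_zero (p : ℕ → V) (hp : IsPlay p) (k : ℕ) (h6 : p k = 6) :
    ∀ d m, m = k + 1 + d → (p m = 0 ∨ p m = 1) → ∃ j, p j = 4 ∧ p (j+1) = 1 := by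
  intro d
  induction d with
  | zero =>
      intro m hm hm01
      exfalso
      have h3 : p (k+1) = 3 := pstep6 p hp k h6
      have hm' : m = k + 1 := by omega
      subst hm'
      rcases hm01 with h | h <;> rw [h3] at h <;> exact absurd h (by decide)
  | succ d ih =>
      intro m hm hm01
      have hm' : m = (k + 1 + d) + 1 := by omega
      subst hm'
      rcases hm01 with h | h
      · exact ih _ rfl (Or.inr (pinto0 p hp _ h))
      · rcases pinto1 p hp _ h with h1 | h1
        · exact ih _ rfl (Or.inl h1)
        · exact ⟨k + 1 + d, h1, h⟩

/-! ### Trap plays against player 1's strategy -/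

lemma trap23_lemma (σ1 : Strategy)
    (hσ1ρ1 : ∀ (h : List V) (c : V), owner c = 1 → ρ 1 c (σ1 h c)) (v : V) :
    ∃ u : ℕ → V, IsPlay u ∧ u 0 = v ∧ Consistent 1 σ1 u ∧
      ∃ K, ∀ t, K ≤ t → (u t = 2 ∨ u t = 3) := by
  have hP : IsPlay (rp t23 σ1 v) := isPlay_rp _ _ _ t23_valid hσ1ρ1
  refine ⟨rp t23 σ1 v, hP, rfl, consistent1 _ _ _, ?_⟩
  have step1 : ∀ k, rp t23 σ1 v k = 1 → rp t23 σ1 v (k+1) = 2 := by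
    intro k h; rw [move0 t23 σ1 v k 1 h (by decide)]; rfl
  have step3 : ∀ k, rp t23 σ1 v k = 3 → rp t23 σ1 v (k+1) = 2 := by
    intro k h; rw [move0 t23 σ1 v k 3 h (by decide)]; rfl
  have tail : ∀ K, (rp t23 σ1 v K = 2 ∨ rp t23 σ1 v K = 3) →
      ∀ t, K ≤ t → (rp t23 σ1 v t = 2 ∨ rp t23 σ1 v t = 3) := by
    intro K hK t ht
    induction t, ht using Nat.le_induction with
    | base => exact hK
    | succ t ht ih =>
      rcases ih with h | h
      · exact Or.inr (pstep2 _ hP t h)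
      · exact Or.inl (step3 t h)
  have h0v : rp t23 σ1 v 0 = v := rfl
  rcases allV v with h | h | h | h | h | h | h
  · exact ⟨2, tail 2 (Or.inl (step1 1 (pstep0 _ hP 0 (h0v.trans h))))⟩
  · exact ⟨1, tail 1 (Or.inl (step1 0 (h0v.trans h)))⟩
  · exact ⟨0, tail 0 (Or.inl (h0v.trans h))⟩
  · exact ⟨0, tail 0 (Or.inr (h0v.trans h))⟩
  · rcases pstep4 _ hP 0 (h0v.trans h) with e | e
    · exact ⟨2, tail 2 (Or.inl (step1 1 e))⟩
    · exact ⟨3, tail 3 (Or.inr (pstep6 _ hP 2 (pstep5 _ hP 1 e)))⟩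
  · exact ⟨2, tail 2 (Or.inr (pstep6 _ hP 1 (pstep5 _ hP 0 (h0v.trans h))))⟩
  · exact ⟨1, tail 1 (Or.inr (pstep6 _ hP 0 (h0v.trans h)))⟩

lemma tstar_lemma (σ1 : Strategy) (ρ' : V → V → Prop)
    (hsub : ∀ a b : V, ρ' a b → ρ 1 a b)
    (hval : ∀ (h : List V) (c : V), owner c = 1 → ρ' c (σ1 h c)) (v : V) :
    ∃ u : ℕ → V, IsPlay u ∧ u 0 = v ∧ Consistent 1 σ1 u ∧
      ((∃ K, ∀ t, K ≤ t → (u t = 0 ∨ u t = 1)) ∨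
       ((∀ k, u (k+1) = 3 ∨ u (k+1) = 4 ∨ u (k+1) = 5 ∨ u (k+1) = 6) ∧ ρ' 4 5)) := by
  have hσ1ρ1 : ∀ (h : List V) (c : V), owner c = 1 → ρ 1 c (σ1 h c) :=
    fun h c hc => hsub _ _ (hval h c hc)
  have hP : IsPlay (rp tst σ1 v) := isPlay_rp _ _ _ tst_valid hσ1ρ1
  refine ⟨rp tst σ1 v, hP, rfl, consistent1 _ _ _, ?_⟩
  by_cases hex : ∃ k, rp tst σ1 v k = 1
  · left
    obtain ⟨K, hK⟩ := hex
    refine ⟨K, ?_⟩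
    intro t ht
    induction t, ht using Nat.le_induction with
    | base => exact Or.inr hK
    | succ t ht ih =>
      rcases ih with h | h
      · exact Or.inr (pstep0 _ hP t h)
      · refine Or.inl ?_
        rw [move0 tst σ1 v t 1 h (by decide)]; rfl
  · right
    push_neg at hex
    constructor
    · intro k
      have e1 : rp tst σ1 v (k+1) ≠ 1 := hex _
      have e0 : rp tst σ1 v (k+1) ≠ 0 := fun h => hex k (pinto0 _ hP k h)
      have e2 : rp tst σ1 v (k+1) ≠ 2 := by
        intro h
        rcases pinto2 _ hP k h with h' | h'
        · exact hex k h'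
        · have hm : rp tst σ1 v (k+1) = 4 := by
            rw [move0 tst σ1 v k 3 h' (by decide)]; rfl
          rw [hm] at h; exact absurd h (by decide)
      rcases allV (rp tst σ1 v (k+1)) with h | h | h | h | h | h | h
      · exact absurd h e0
      · exact absurd h e1
      · exact absurd h e2
      · exact Or.inl h
      · exact Or.inr (Or.inl h)
      · exact Or.inr (Or.inr (Or.inl h))
      · exact Or.inr (Or.inr (Or.inr h))
    · have h0v : rp tst σ1 v 0 = v := rfl
      have reach4 : ∃ k, rp tst σ1 v k = 4 := by
        rcases allV v with h | h | h | h | h | h | h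
        · exact absurd (pstep0 _ hP 0 (h0v.trans h)) (hex 1)
        · exact absurd (h0v.trans h) (hex 0)
        · refine ⟨2, ?_⟩
          rw [move0 tst σ1 v 1 3 (pstep2 _ hP 0 (h0v.trans h)) (by decide)]; rfl
        · refine ⟨1, ?_⟩
          rw [move0 tst σ1 v 0 3 (h0v.trans h) (by decide)]; rfl
        · exact ⟨0, h0v.trans h⟩
        · refine ⟨3, ?_⟩
          rw [move0 tst σ1 v 2 3 (pstep6 _ hP 1 (pstep5 _ hP 0 (h0v.trans h))) (by decide)]; rfl
        · refine ⟨2, ?_⟩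
          rw [move0 tst σ1 v 1 3 (pstep6 _ hP 0 (h0v.trans h)) (by decide)]; rfl
      obtain ⟨k, hk4⟩ := reach4
      have hm : rp tst σ1 v (k+1) = σ1 ((List.range k).map (rp tst σ1 v)) 4 :=
        move1 tst σ1 v k 4 hk4 (by decide)
      have h15 := (by decide : ∀ b : V, ρ 1 4 b → b = 1 ∨ b = 5) _
        (hσ1ρ1 ((List.range k).map (rp tst σ1 v)) 4 (by decide))
      have hρ4 := hval ((List.range k).map (rp tst σ1 v)) 4 (by decide)
      rcases h15 with h | h
      · exact absurd (hm.trans h) (hex (k+1))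
      · rwa [h] at hρ4

/-! ### Counterexample plays against player 0's strategy -/

lemma cexD1 (σ0 : Strategy) (hσ0 : ValidStrategy 0 σ0) (ρ' : V → V → Prop)
    (h01' : ρ' 0 1) (h23' : ρ' 2 3) (h41' : ρ' 4 1) (h63' : ρ' 6 3) (v : V) :
    ∃ w : ℕ → V, IsPlay w ∧ w 0 = v ∧ Consistent 0 σ0 w ∧
      (∀ k, owner (w k) = 1 → ρ' (w k) (w (k+1))) ∧
      (∀ k, 2 ≤ k → w k ≠ 6) ∧
      ((∀ N, ∃ k, N ≤ k ∧ w k = 2 ∧ w (k+1) = 3) ∨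
       (∀ N, ∃ k, N ≤ k ∧ w k = 0 ∧ w (k+1) = 1)) := by
  have hP : IsPlay (rp σ0 f1 v) := isPlay_rp _ _ _ hσ0 f1_valid
  have m0 : ∀ k, rp σ0 f1 v k = 0 → rp σ0 f1 v (k+1) = 1 := by
    intro k h; rw [move1 σ0 f1 v k 0 h (by decide)]; rfl
  have m2 : ∀ k, rp σ0 f1 v k = 2 → rp σ0 f1 v (k+1) = 3 := by
    intro k h; rw [move1 σ0 f1 v k 2 h (by decide)]; rfl
  have m4 : ∀ k, rp σ0 f1 v k = 4 → rp σ0 f1 v (k+1) = 1 := by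
    intro k h; rw [move1 σ0 f1 v k 4 h (by decide)]; rfl
  have m6 : ∀ k, rp σ0 f1 v k = 6 → rp σ0 f1 v (k+1) = 3 := by
    intro k h; rw [move1 σ0 f1 v k 6 h (by decide)]; rfl
  have hbox : ∀ k, owner (rp σ0 f1 v k) = 1 → ρ' (rp σ0 f1 v k) (rp σ0 f1 v (k+1)) := by
    intro k hk
    rcases (by decide : ∀ c : V, owner c = 1 → c = 0 ∨ c = 2 ∨ c = 4 ∨ c = 6) _ hk
      with h | h | h | h
    · rw [h, m0 k h]; exact h01'
    · rw [h, m2 k h]; exact h23'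
    · rw [h, m4 k h]; exact h41'
    · rw [h, m6 k h]; exact h63'
  have no5 : ∀ k, rp σ0 f1 v (k+1) ≠ 5 := by
    intro k h5
    have h4 := pinto5 _ hP k h5
    rw [m4 k h4] at h5
    exact absurd h5 (by decide)
  have no6 : ∀ k, 2 ≤ k → rp σ0 f1 v k ≠ 6 := by
    intro k hk h6
    obtain ⟨t, rfl⟩ : ∃ t, k = t + 1 + 1 := ⟨k - 2, by omega⟩
    exact no5 t (pinto6 _ hP (t+1) h6)
  refine ⟨rp σ0 f1 v, hP, rfl, consistent0 _ _ _, hbox, no6, ?_⟩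
  by_cases h2io : ∀ N, ∃ k, N ≤ k ∧ rp σ0 f1 v k = 2
  · left
    intro N
    obtain ⟨k, hk, h2⟩ := h2io N
    exact ⟨k, hk, h2, pstep2 _ hP k h2⟩
  · right
    push_neg at h2io
    obtain ⟨N, hN⟩ := h2io
    have no3 : ∀ k, N + 3 ≤ k → rp σ0 f1 v k ≠ 3 := by
      intro k hk h3
      obtain ⟨t, rfl⟩ : ∃ t, k = t + 1 := ⟨k - 1, by omega⟩
      rcases pinto3 _ hP t h3 with h | h
      · exact hN t (by omega) h
      · exact no6 t (by omega) h
    have no4 : ∀ k, N + 4 ≤ k → rp σ0 f1 v k ≠ 4 := by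
      intro k hk h4
      obtain ⟨t, rfl⟩ : ∃ t, k = t + 1 := ⟨k - 1, by omega⟩
      exact no3 t (by omega) (pinto4 _ hP t h4)
    intro M
    have hge : N + 5 ≤ max M (N + 5) := le_max_right _ _
    have hgeM : M ≤ max M (N + 5) := le_max_left _ _
    have in01 : rp σ0 f1 v (max M (N+5)) = 0 ∨ rp σ0 f1 v (max M (N+5)) = 1 := by
      rcases allV (rp σ0 f1 v (max M (N+5))) with h | h | h | h | h | h | h
      · exact Or.inl h
      · exact Or.inr h
      · exact absurd h (hN _ (by omega))
      · exact absurd h (no3 _ (by omega))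
      · exact absurd h (no4 _ (by omega))
      · exfalso
        obtain ⟨t, ht⟩ : ∃ t, max M (N+5) = t + 1 := ⟨max M (N+5) - 1, by omega⟩
        rw [ht] at h
        exact no5 t h
      · exact absurd h (no6 _ (by omega))
    rcases in01 with h | h
    · exact ⟨max M (N+5), hgeM, h, m0 _ h⟩
    · rcases pstep1 _ hP _ h with h0 | h0
      · exact ⟨max M (N+5) + 1, by omega, h0, m0 _ h0⟩
      · exact absurd h0 (hN _ (by omega))

lemma cexD2 (σ0 : Strategy) (hσ0 : ValidStrategy 0 σ0) (σ1 : Strategy)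
    (hs0 : ∀ h : List V, σ1 h 0 = 1) (ρ' : V → V → Prop)
    (h01' : ρ' 0 1) (h23' : ρ' 2 3) (h45' : ρ' 4 5) (h63' : ρ' 6 3) (v : V) :
    ∃ w : ℕ → V, IsPlay w ∧ w 0 = v ∧ Consistent 0 σ0 w ∧
      (∀ k, owner (w k) = 1 → ρ' (w k) (w (k+1))) ∧
      ((Consistent 1 σ1 w ∧ ∀ k, w k = 0 ∨ w k = 1) ∨
       (∃ k0, (∀ k, k0 ≤ k → w k ≠ 0) ∧
         ((∀ N, ∃ k, N ≤ k ∧ w k = 2 ∧ w (k+1) = 3) ∨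
          (∀ N, ∃ k, N ≤ k ∧ w k = 3 ∧ w (k+1) = 4 ∧ w (k+2) = 5 ∧ w (k+3) = 6)))) := by
  have hP : IsPlay (rp σ0 f2 v) := isPlay_rp _ _ _ hσ0 f2_valid
  have m0 : ∀ k, rp σ0 f2 v k = 0 → rp σ0 f2 v (k+1) = 1 := by
    intro k h; rw [move1 σ0 f2 v k 0 h (by decide)]; rfl
  have m2 : ∀ k, rp σ0 f2 v k = 2 → rp σ0 f2 v (k+1) = 3 := by
    intro k h; rw [move1 σ0 f2 v k 2 h (by decide)]; rfl
  have m4 : ∀ k, rp σ0 f2 v k = 4 → rp σ0 f2 v (k+1) = 5 := by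
    intro k h; rw [move1 σ0 f2 v k 4 h (by decide)]; rfl
  have m6 : ∀ k, rp σ0 f2 v k = 6 → rp σ0 f2 v (k+1) = 3 := by
    intro k h; rw [move1 σ0 f2 v k 6 h (by decide)]; rfl
  have hbox : ∀ k, owner (rp σ0 f2 v k) = 1 → ρ' (rp σ0 f2 v k) (rp σ0 f2 v (k+1)) := by
    intro k hk
    rcases (by decide : ∀ c : V, owner c = 1 → c = 0 ∨ c = 2 ∨ c = 4 ∨ c = 6) _ hk
      with h | h | h | h
    · rw [h, m0 k h]; exact h01'
    · rw [h, m2 k h]; exact h23'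
    · rw [h, m4 k h]; exact h45'
    · rw [h, m6 k h]; exact h63'
  refine ⟨rp σ0 f2 v, hP, rfl, consistent0 _ _ _, hbox, ?_⟩
  by_cases hα : ∀ k, rp σ0 f2 v k = 0 ∨ rp σ0 f2 v k = 1
  · left
    refine ⟨?_, hα⟩
    intro k hk
    rcases hα k with h | h
    · rw [m0 k h, h, hs0]
    · rw [h] at hk; exact absurd hk (by decide)
  · right
    push_neg at hα
    obtain ⟨k0, hk0⟩ := hα
    have inv : ∀ k, k0 ≤ k → rp σ0 f2 v k ≠ 0 ∧ rp σ0 f2 v k ≠ 1 := by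
      intro k hk
      induction k, hk using Nat.le_induction with
      | base => exact hk0
      | succ t ht ih =>
        constructor
        · intro h; exact ih.2 (pinto0 _ hP t h)
        · intro h
          rcases pinto1 _ hP t h with h' | h'
          · exact ih.1 h'
          · rw [m4 t h'] at h; exact absurd h (by decide)
    refine ⟨k0, fun k hk => (inv k hk).1, ?_⟩
    have io3 : ∀ M, ∃ k, M ≤ k ∧ rp σ0 f2 v k = 3 := by
      intro M
      have hge1 : M ≤ max M k0 := le_max_left _ _
      have hge2 : k0 ≤ max M k0 := le_max_right _ _
      rcases allV (rp σ0 f2 v (max M k0)) with h | h | h | h | h | h | h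
      · exact absurd h (inv _ hge2).1
      · exact absurd h (inv _ hge2).2
      · exact ⟨max M k0 + 1, by omega, pstep2 _ hP _ h⟩
      · exact ⟨max M k0, hge1, h⟩
      · exact ⟨max M k0 + 3, by omega, pstep6 _ hP _ (pstep5 _ hP _ (m4 _ h))⟩
      · exact ⟨max M k0 + 2, by omega, pstep6 _ hP _ (pstep5 _ hP _ h)⟩
      · exact ⟨max M k0 + 1, by omega, pstep6 _ hP _ h⟩
    by_cases h2io : ∀ N, ∃ k, N ≤ k ∧ rp σ0 f2 v k = 2
    · left
      intro N
      obtain ⟨k, hk, h2⟩ := h2io N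
      exact ⟨k, hk, h2, pstep2 _ hP k h2⟩
    · right
      push_neg at h2io
      obtain ⟨N, hN⟩ := h2io
      intro M
      obtain ⟨k, hk, h3⟩ := io3 (max M N)
      have hgeM : M ≤ max M N := le_max_left _ _
      have hgeN : N ≤ max M N := le_max_right _ _
      rcases pstep3 _ hP k h3 with h | h
      · exact absurd h (hN (k+1) (by omega))
      · have h5 : rp σ0 f2 v (k+2) = 5 := m4 (k+1) h
        exact ⟨k, by omega, h3, h, h5, pstep5 _ hP (k+2) h5⟩

/-- nonexistence of a GR(1) assumption: in the game of Figure 2,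
for every initial node `v`, there is no GR(1) property `□ρ' ∧ ⋀_{i < n} □◇(Ps i)`
— with `Ps i ⊆ V` sets of nodes and `ρ' ⊆ ρ1` a subset of player 1's edges —
such that both:
(i) player 1, restricted to choosing only edges in `ρ'`, has a strategy from `v`
all of whose consistent plays satisfy `⋀_{i < n} □◇(Ps i)`, and
(ii) player 0 has a strategy from `v` all of whose consistent plays satisfy
`(□ρ' ∧ ⋀_{i < n} □◇(Ps i)) → (□◇G1 ∧ □◇G2)`, where a play satisfies `□ρ'` if
every step taken from a node owned by player 1 is an edge of `ρ'`. -/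
theorem no_gr1_assumption (v : V) :
    ¬ ∃ (n : ℕ) (Ps : Fin n → Set V) (ρ' : V → V → Prop),
        (∀ a b : V, ρ' a b → ρ 1 a b) ∧
        (∃ σ : Strategy,
          (∀ (h : List V) (u : V), owner u = 1 → ρ' u (σ h u)) ∧
          ∀ w : ℕ → V, IsPlay w → w 0 = v → Consistent 1 σ w →
            ∀ i : Fin n, InfOften (Ps i) w) ∧
        (∃ σ : Strategy, ValidStrategy 0 σ ∧
          ∀ w : ℕ → V, IsPlay w → w 0 = v → Consistent 0 σ w →
            ((∀ k : ℕ, owner (w k) = 1 → ρ' (w k) (w (k + 1))) ∧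
              ∀ i : Fin n, InfOften (Ps i) w) →
            (InfOften G1 w ∧ InfOften G2 w)) := by
  rintro ⟨n, Ps, ρ', hsub, ⟨σ1, hval, hguar⟩, ⟨σ0, hσ0, hwin⟩⟩
  classical
  have hσ1ρ1 : ∀ (h : List V) (c : V), owner c = 1 → ρ 1 c (σ1 h c) :=
    fun h c hc => hsub _ _ (hval h c hc)
  have hs0 : ∀ h : List V, σ1 h 0 = 1 :=
    fun h => (by decide : ∀ b : V, ρ 1 0 b → b = 1) _ (hσ1ρ1 h 0 (by decide))
  have hs2 : ∀ h : List V, σ1 h 2 = 3 :=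
    fun h => (by decide : ∀ b : V, ρ 1 2 b → b = 3) _ (hσ1ρ1 h 2 (by decide))
  have hs6 : ∀ h : List V, σ1 h 6 = 3 :=
    fun h => (by decide : ∀ b : V, ρ 1 6 b → b = 3) _ (hσ1ρ1 h 6 (by decide))
  have hρ'01 : ρ' 0 1 := by have := hval [] 0 (by decide); rwa [hs0] at this
  have hρ'23 : ρ' 2 3 := by have := hval [] 2 (by decide); rwa [hs2] at this
  have hρ'63 : ρ' 6 3 := by have := hval [] 6 (by decide); rwa [hs6] at this
  -- every `Ps i` meets the cycle `{s2, s3}`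
  obtain ⟨u, huP, hu0, huC, K, hK⟩ := trap23_lemma σ1 hσ1ρ1 v
  have h23 : ∀ i, (2 : V) ∈ Ps i ∨ (3 : V) ∈ Ps i := by
    intro i
    obtain ⟨k, hk, hkP⟩ := hguar u huP hu0 huC i K
    rcases hK k hk with h | h
    · left; rwa [h] at hkP
    · right; rwa [h] at hkP
  -- the combined play of σ0 and σ1 shows that the edge s4 → s1 belongs to ρ'
  have hρ'41 : ρ' 4 1 := by
    have hwP : IsPlay (rp σ0 σ1 v) := isPlay_rp _ _ _ hσ0 hσ1ρ1
    have hwC1 : Consistent 1 σ1 (rp σ0 σ1 v) := consistent1 _ _ _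
    have hbox : ∀ k, owner (rp σ0 σ1 v k) = 1 →
        ρ' (rp σ0 σ1 v k) (rp σ0 σ1 v (k+1)) := by
      intro k hk; rw [hwC1 k hk]; exact hval _ _ hk
    have hPs := hguar _ hwP rfl hwC1
    obtain ⟨hg1, hg2⟩ := hwin _ hwP rfl (consistent0 _ _ _) ⟨hbox, hPs⟩
    obtain ⟨k, hk1, hk6⟩ := hg1 1
    obtain ⟨m, hm, hm0⟩ := hg2 (k+1)
    have hk6' : rp σ0 σ1 v k = 6 := hk6
    have hm0' : rp σ0 σ1 v m = 0 := hm0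
    obtain ⟨j, hj4, hj1⟩ :=
      back_to_zero (rp σ0 σ1 v) hwP k hk6' (m - (k+1)) m (by omega) (Or.inl hm0')
    have := hbox j (by rw [hj4]; decide)
    rwa [hj4, hj1] at this
  -- dichotomy given by the second trap play
  obtain ⟨us, husP, hus0, husC, hdi⟩ := tstar_lemma σ1 ρ' hsub hval v
  rcases hdi with ⟨K', hK'⟩ | ⟨hin, hρ'45⟩
  · -- Case D1: every `Ps i` also meets `{s0, s1}`
    have h01 : ∀ i, (0 : V) ∈ Ps i ∨ (1 : V) ∈ Ps i := by
      intro i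
      obtain ⟨k, hk, hkP⟩ := hguar us husP hus0 husC i K'
      rcases hK' k hk with h | h
      · left; rwa [h] at hkP
      · right; rwa [h] at hkP
    obtain ⟨w, hP, h0, hC, hbox, hno6, hdi2⟩ := cexD1 σ0 hσ0 ρ' hρ'01 hρ'23 hρ'41 hρ'63 v
    have hPs : ∀ i, InfOften (Ps i) w := by
      intro i N
      rcases hdi2 with hio | hio
      · obtain ⟨k, hk, h2, h3⟩ := hio N
        rcases h23 i with hm | hm
        · exact ⟨k, hk, by rw [h2]; exact hm⟩
        · exact ⟨k+1, by omega, by rw [h3]; exact hm⟩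
      · obtain ⟨k, hk, ha, hb⟩ := hio N
        rcases h01 i with hm | hm
        · exact ⟨k, hk, by rw [ha]; exact hm⟩
        · exact ⟨k+1, by omega, by rw [hb]; exact hm⟩
    obtain ⟨hg1, -⟩ := hwin w hP h0 hC ⟨hbox, hPs⟩
    obtain ⟨k, hk, hk6⟩ := hg1 2
    exact hno6 k hk hk6
  · -- Case D2: every `Ps i` also meets `{s3, s4, s5, s6}`
    have h3456 : ∀ i, (3 : V) ∈ Ps i ∨ (4 : V) ∈ Ps i ∨ (5 : V) ∈ Ps i ∨ (6 : V) ∈ Ps i := by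
      intro i
      obtain ⟨k, hk, hkP⟩ := hguar us husP hus0 husC i 1
      obtain ⟨t, rfl⟩ : ∃ t, k = t + 1 := ⟨k - 1, by omega⟩
      rcases hin t with h | h | h | h
      · exact Or.inl (by rwa [h] at hkP)
      · exact Or.inr (Or.inl (by rwa [h] at hkP))
      · exact Or.inr (Or.inr (Or.inl (by rwa [h] at hkP)))
      · exact Or.inr (Or.inr (Or.inr (by rwa [h] at hkP)))
    obtain ⟨w, hP, h0, hC, hbox, hdi2⟩ := cexD2 σ0 hσ0 σ1 hs0 ρ' hρ'01 hρ'23 hρ'45 hρ'63 v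
    rcases hdi2 with ⟨hC1, hα⟩ | ⟨k0, hne0, hio⟩
    · have hPs := hguar w hP h0 hC1
      obtain ⟨hg1, -⟩ := hwin w hP h0 hC ⟨hbox, hPs⟩
      obtain ⟨k, -, hk6⟩ := hg1 0
      have h6 : w k = 6 := hk6
      rcases hα k with h | h <;> rw [h] at h6 <;> exact absurd h6 (by decide)
    · have hPs : ∀ i, InfOften (Ps i) w := by
        intro i N
        rcases hio with hio | hio
        · obtain ⟨k, hk, h2, h3⟩ := hio N
          rcases h23 i with hm | hm
          · exact ⟨k, hk, by rw [h2]; exact hm⟩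
          · exact ⟨k+1, by omega, by rw [h3]; exact hm⟩
        · obtain ⟨k, hk, h3, h4, h5, h6⟩ := hio N
          rcases h3456 i with hm | hm | hm | hm
          · exact ⟨k, hk, by rw [h3]; exact hm⟩
          · exact ⟨k+1, by omega, by rw [h4]; exact hm⟩
          · exact ⟨k+2, by omega, by rw [h5]; exact hm⟩
          · exact ⟨k+3, by omega, by rw [h6]; exact hm⟩
      obtain ⟨-, hg2⟩ := hwin w hP h0 hC ⟨hbox, hPs⟩
      obtain ⟨k, hk, hk0⟩ := hg2 k0
      exact hne0 k hk hk0

end Fig2
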